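/- For any nonempty index (k_1,…,k_r) of positive integers and any positive integer N, ∑_{i=0}^r (-1)^i · ζ^♭_{<N}(k_1,…,k_i) · ζ^{⋆♭}_{<N}(k_r,…,k_{i+1}) = 0, the antipode identity for the ♭-versions of multiple harmonic sums. -/

import Mathlib

/-- Auxiliary recursion for the ♭-sum.  `flatAux N M j t` sums over the remaining `j`
(bottom) variables `n₁ ≤ ⋯ ≤ n_j < M` of the current block (the bottom variable carries
the factor `1/(N - n₁)`, the others `1/n`), followed by the blocks listed in `t`
(given in reverse order, so that for the next block `k` the condition
`n_{k-top} < n₁` holds). -/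
def flatAux (N : ℕ) : ℕ → ℕ → List ℕ → ℚ
  | _, 0, [] => 1
  | M, 0, k :: t => flatAux N M k t
  | M, 1, t => ∑ n ∈ Finset.Ioo 0 M, (1 / ((N : ℚ) - (n : ℚ))) * flatAux N n 0 t
  | M, (j+2), t => ∑ n ∈ Finset.Ioo 0 M, (1 / (n : ℚ)) * flatAux N (n+1) (j+1) t
  termination_by _ j t => (t.length, j)

/-- The ♭-sum `ζ♭_{<N}(k₁,…,k_r)`: the sum of `∏ᵢ 1/((N-n_{i1})·n_{i2}⋯n_{i k_i})` over
`n_{ij} ∈ [1,N-1]` with `n_{i1} ≤ ⋯ ≤ n_{i k_i}` for each `i` and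
`n_{i k_i} < n_{(i+1)1}` for `1 ≤ i < r`. -/
def zetaFlat (N : ℕ) (ks : List ℕ) : ℚ := flatAux N N 0 ks.reverse

/-- Auxiliary recursion for the ⋆♭-sum.  `sfAux N lo hi j t` sums over the remaining `j`
variables of the current block, going downwards from the top: the current variable ranges
over `[lo, hi]`; the bottom variable of a block carries the factor `1/(N - n)` and its
value is the (inclusive) lower bound for the top variable of the next block
(the condition `n_{(i-1)1} ≤ n_{i k_i}`), whose range goes up to `N - 1`. -/
def sfAux (N : ℕ) : ℕ → ℕ → ℕ → List ℕ → ℚ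
  | _, _, 0, [] => 1
  | lo, _, 0, k :: t => sfAux N lo (N - 1) k t
  | lo, hi, 1, t => ∑ n ∈ Finset.Icc lo hi, (1 / ((N : ℚ) - (n : ℚ))) * sfAux N n 0 0 t
  | lo, hi, (j+2), t => ∑ n ∈ Finset.Icc lo hi, (1 / (n : ℚ)) * sfAux N 1 n (j+1) t
  termination_by _ _ j t => (t.length, j)

/-- The ⋆♭-sum `ζ⋆♭_{<N}(k₁,…,k_r)`: the sum of `∏ᵢ 1/((N-n_{i1})·n_{i2}⋯n_{i k_i})` over
`n_{ij} ∈ [1,N-1]` with `n_{i1} ≤ ⋯ ≤ n_{i k_i}` for each `i` and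
`n_{(i-1)1} ≤ n_{i k_i}` for `2 ≤ i ≤ r`. -/
def zetaStarFlat (N : ℕ) (ks : List ℕ) : ℚ := sfAux N 1 (N - 1) 0 ks

def mixAux (N : ℕ) : ℕ → ℕ → ℕ → List ℕ → List ℕ → ℚ
  | lo, _, 0, [], t => flatAux N lo 0 t
  | lo, _, 0, k :: s, t => mixAux N lo (N - 1) k s t
  | lo, hi, 1, s, t => ∑ n ∈ Finset.Icc lo hi, (1 / ((N : ℚ) - (n : ℚ))) * mixAux N n 0 0 s t
  | lo, hi, (j+2), s, t => ∑ n ∈ Finset.Icc lo hi, (1 / (n : ℚ)) * mixAux N 1 n (j+1) s t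
  termination_by _ _ j s _ => (s.length, j)

theorem mixAux_nil (N lo hi j : ℕ) (s : List ℕ) : mixAux N lo hi j s [] = sfAux N lo hi j s := by
  match j, s with
  | 0, [] => simp [mixAux, sfAux, flatAux]
  | 0, k :: s =>
    rw [mixAux, sfAux]
    exact mixAux_nil N lo (N-1) k s
  | 1, s =>
    rw [mixAux, sfAux]
    exact Finset.sum_congr rfl fun n _ => by rw [mixAux_nil N n 0 0 s]
  | (j+2), s =>
    rw [mixAux, sfAux]
    exact Finset.sum_congr rfl fun n _ => by rw [mixAux_nil N 1 n (j+1) s]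
  termination_by (s.length, j)

theorem icc_one (hi : ℕ) : Finset.Ioo 0 (hi+1) = Finset.Icc 1 hi := by
  ext n; simp; omega

theorem mixAux_one (N : ℕ) : ∀ (j : ℕ) (t : List ℕ) (hi : ℕ),
    mixAux N 1 hi (j+1) [] t = flatAux N (hi+1) (j+1) t := by
  intro j
  induction j with
  | zero =>
    intro t hi
    rw [mixAux, flatAux, icc_one]
    exact Finset.sum_congr rfl fun n _ => by rw [show mixAux N n 0 0 [] t = flatAux N n 0 t from by rw [mixAux]]
  | succ j ih =>
    intro t hi
    rw [mixAux, flatAux, icc_one]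
    exact Finset.sum_congr rfl fun n _ => by rw [ih]

theorem ioo_sdiff (N lo : ℕ) (hN : 0 < N) (h1 : 1 ≤ lo) (h2 : lo ≤ N) :
    Finset.Ioo 0 N \ Finset.Ioo 0 lo = Finset.Icc lo (N-1) := by
  ext n; simp only [Finset.mem_sdiff, Finset.mem_Ioo, Finset.mem_Icc]; omega

theorem mixAux_split (N : ℕ) (hN : 0 < N) (j : ℕ) (t : List ℕ) (lo : ℕ)
    (h1 : 1 ≤ lo) (h2 : lo ≤ N) :
    mixAux N lo (N-1) (j+1) [] t = flatAux N N (j+1) t - flatAux N lo (j+1) t := by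
  have hsub : Finset.Ioo 0 lo ⊆ Finset.Ioo 0 N := by
    intro n hn; simp at hn ⊢; omega
  match j with
  | 0 =>
    rw [mixAux]
    rw [show flatAux N N 1 t = ∑ n ∈ Finset.Ioo 0 N, (1 / ((N : ℚ) - (n : ℚ))) * flatAux N n 0 t from by rw [flatAux]]
    rw [show flatAux N lo 1 t = ∑ n ∈ Finset.Ioo 0 lo, (1 / ((N : ℚ) - (n : ℚ))) * flatAux N n 0 t from by rw [flatAux]]
    rw [← Finset.sum_sdiff_eq_sub hsub, ioo_sdiff N lo hN h1 h2]
    exact Finset.sum_congr rfl fun n _ => by rw [show mixAux N n 0 0 [] t = flatAux N n 0 t from by rw [mixAux]]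
  | (j+1) =>
    rw [mixAux]
    rw [show flatAux N N (j+2) t = ∑ n ∈ Finset.Ioo 0 N, (1 / (n : ℚ)) * flatAux N (n+1) (j+1) t from by rw [flatAux]]
    rw [show flatAux N lo (j+2) t = ∑ n ∈ Finset.Ioo 0 lo, (1 / (n : ℚ)) * flatAux N (n+1) (j+1) t from by rw [flatAux]]
    rw [← Finset.sum_sdiff_eq_sub hsub, ioo_sdiff N lo hN h1 h2]
    exact Finset.sum_congr rfl fun n _ => by rw [mixAux_one]

theorem key (N : ℕ) (hN : 0 < N) (k : ℕ) (hk : 0 < k) (j : ℕ) (s t : List ℕ)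
    (lo hi : ℕ) (h1 : 1 ≤ lo) (h2 : lo ≤ N) (h3 : hi ≤ N - 1) :
    mixAux N lo hi j (s ++ [k]) t + mixAux N lo hi j s (k :: t) =
      flatAux N N 0 (k :: t) * sfAux N lo hi j s := by
  match j, s with
  | 0, [] =>
    simp only [List.nil_append]
    rw [show mixAux N lo hi 0 [k] t = mixAux N lo (N-1) k [] t from by rw [mixAux]]
    rw [show mixAux N lo hi 0 [] (k::t) = flatAux N lo 0 (k::t) from by rw [mixAux]]
    rw [show sfAux N lo hi 0 ([] : List ℕ) = 1 from by rw [sfAux]]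
    obtain ⟨j', rfl⟩ : ∃ j', k = j' + 1 := ⟨k - 1, by omega⟩
    rw [mixAux_split N hN j' t lo h1 h2]
    rw [show flatAux N N 0 ((j'+1)::t) = flatAux N N (j'+1) t from by rw [flatAux]]
    rw [show flatAux N lo 0 ((j'+1)::t) = flatAux N lo (j'+1) t from by rw [flatAux]]
    ring
  | 0, k' :: s =>
    rw [show ((k' :: s) ++ [k]) = k' :: (s ++ [k]) from rfl]
    rw [show mixAux N lo hi 0 (k' :: (s ++ [k])) t = mixAux N lo (N-1) k' (s++[k]) t from by rw [mixAux]]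
    rw [show mixAux N lo hi 0 (k' :: s) (k::t) = mixAux N lo (N-1) k' s (k::t) from by rw [mixAux]]
    rw [show sfAux N lo hi 0 (k' :: s) = sfAux N lo (N-1) k' s from by rw [sfAux]]
    exact key N hN k hk k' s t lo (N-1) h1 h2 le_rfl
  | 1, s =>
    rw [show mixAux N lo hi 1 (s ++ [k]) t = ∑ n ∈ Finset.Icc lo hi, (1 / ((N : ℚ) - (n : ℚ))) * mixAux N n 0 0 (s ++ [k]) t from by rw [mixAux]]
    rw [show mixAux N lo hi 1 s (k :: t) = ∑ n ∈ Finset.Icc lo hi, (1 / ((N : ℚ) - (n : ℚ))) * mixAux N n 0 0 s (k :: t) from by rw [mixAux]]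
    rw [show sfAux N lo hi 1 s = ∑ n ∈ Finset.Icc lo hi, (1 / ((N : ℚ) - (n : ℚ))) * sfAux N n 0 0 s from by rw [sfAux]]
    rw [← Finset.sum_add_distrib, Finset.mul_sum]
    refine Finset.sum_congr rfl fun n hn => ?_
    simp only [Finset.mem_Icc] at hn
    rw [← mul_add, key N hN k hk 0 s t n 0 (le_trans h1 hn.1) (by omega) (by omega)]
    ring
  | (j+2), s =>
    rw [show mixAux N lo hi (j+2) (s ++ [k]) t = ∑ n ∈ Finset.Icc lo hi, (1 / (n : ℚ)) * mixAux N 1 n (j+1) (s ++ [k]) t from by rw [mixAux]]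
    rw [show mixAux N lo hi (j+2) s (k :: t) = ∑ n ∈ Finset.Icc lo hi, (1 / (n : ℚ)) * mixAux N 1 n (j+1) s (k :: t) from by rw [mixAux]]
    rw [show sfAux N lo hi (j+2) s = ∑ n ∈ Finset.Icc lo hi, (1 / (n : ℚ)) * sfAux N 1 n (j+1) s from by rw [sfAux]]
    rw [← Finset.sum_add_distrib, Finset.mul_sum]
    refine Finset.sum_congr rfl fun n hn => ?_
    simp only [Finset.mem_Icc] at hn
    rw [← mul_add, key N hN k hk (j+1) s t 1 n le_rfl (by omega) (by omega)]
    ring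
  termination_by (s.length, j)

theorem flatAux_lt_one (N : ℕ) (k : ℕ) (hk : 0 < k) (t : List ℕ) :
    flatAux N 1 0 (k :: t) = 0 := by
  obtain ⟨j, rfl⟩ : ∃ j, k = j + 1 := ⟨k - 1, by omega⟩
  rw [show flatAux N 1 0 ((j+1)::t) = flatAux N 1 (j+1) t from by rw [flatAux]]
  match j with
  | 0 =>
    rw [flatAux, show Finset.Ioo 0 1 = (∅ : Finset ℕ) from by ext n; simp; omega, Finset.sum_empty]
  | (j+1) =>
    rw [flatAux, show Finset.Ioo 0 1 = (∅ : Finset ℕ) from by ext n; simp; omega, Finset.sum_empty]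

/-- The antipode identity for the ♭-versions: for a nonempty index `(k₁,…,k_r)` and `N > 0`,
`∑_{i=0}^r (-1)^i ζ♭_{<N}(k₁,…,kᵢ) ζ⋆♭_{<N}(k_r,…,k_{i+1}) = 0`. -/
theorem antipode_identity_flat (N : ℕ) (hN : 0 < N) (ks : List ℕ) (hne : ks ≠ [])
    (hks : ∀ a ∈ ks, 0 < a) :
    ∑ i ∈ Finset.range (ks.length + 1),
      (-1 : ℚ) ^ i * zetaFlat N (ks.take i) * zetaStarFlat N ((ks.drop i).reverse) = 0 := by
  have main : ∀ j ≤ ks.length, ∑ i ∈ Finset.range (j+1),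
      (-1 : ℚ) ^ i * zetaFlat N (ks.take i) * zetaStarFlat N ((ks.drop i).reverse)
      = (-1 : ℚ) ^ j * mixAux N 1 (N-1) 0 ((ks.drop j).reverse) ((ks.take j).reverse) := by
    intro j
    induction j with
    | zero =>
      intro _
      rw [Finset.sum_range_one]
      simp only [List.take_zero, List.drop_zero, List.reverse_nil, pow_zero, one_mul]
      rw [mixAux_nil, zetaFlat, zetaStarFlat, List.reverse_nil,
        show flatAux N N 0 ([] : List ℕ) = 1 from by rw [flatAux], one_mul]
    | succ j ih =>
      intro hj
      have hjlt : j < ks.length := by omega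
      rw [Finset.sum_range_succ, ih (by omega)]
      have hd : (ks.drop j).reverse = (ks.drop (j+1)).reverse ++ [ks[j]] := by
        rw [List.drop_eq_getElem_cons hjlt, List.reverse_cons]
      have ht : (ks.take (j+1)).reverse = ks[j] :: (ks.take j).reverse := by
        rw [List.take_succ, List.getElem?_eq_getElem hjlt]
        simp
      have hk : 0 < ks[j] := hks _ (List.getElem_mem hjlt)
      have step := key N hN ks[j] hk 0 ((ks.drop (j+1)).reverse) ((ks.take j).reverse)
        1 (N-1) le_rfl hN le_rfl
      rw [zetaFlat, zetaStarFlat, hd, ht]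
      linear_combination ((-1 : ℚ)) ^ j * step
  have h := main ks.length le_rfl
  rw [h, List.take_length, List.drop_length, List.reverse_nil,
    show mixAux N 1 (N-1) 0 [] ks.reverse = flatAux N 1 0 ks.reverse from by rw [mixAux]]
  cases h' : ks.reverse with
  | nil => exact absurd (by simpa using congrArg List.reverse h') hne
  | cons k t =>
    have hk : 0 < k := hks k (List.mem_reverse.mp (h' ▸ (List.mem_cons_self (a := k) (l := t))))
    rw [flatAux_lt_one N k hk t, mul_zero]
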